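/- Let N be an odd perfect number and let r^a be any prime power exactly dividing N (i.e., r is prime, r^a divides N, and r^(a+1) does not divide N, with a ≥ 1). Then r^a·σ(r^a)/N ≤ 2/3. -/

import Mathlib

open ArithmeticFunction Finset

namespace Stmt14Aux

local notation "σ₁" => ArithmeticFunction.sigma 1

lemma sigma_pp {p : ℕ} (hp : p.Prime) (k : ℕ) :
    σ₁ (p ^ k) = ∑ i ∈ range (k + 1), p ^ i := by
  rw [sigma_one_apply, Nat.sum_divisors_prime_pow hp]

lemma geom_mul {r : ℕ} (hr : 1 ≤ r) (n : ℕ) :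
    (∑ i ∈ range n, r ^ i) * (r - 1) + 1 = r ^ n := by
  obtain ⟨s, rfl⟩ : ∃ s, r = s + 1 := ⟨r - 1, by omega⟩
  simp only [Nat.add_sub_cancel]
  induction n with
  | zero => simp
  | succ n ih =>
    rw [sum_range_succ, add_mul, add_right_comm, ih, pow_succ]
    ring

lemma geom_pair (r w : ℕ) :
    ∑ i ∈ range (2 * w), r ^ i = (1 + r) * ∑ i ∈ range w, (r ^ 2) ^ i := by
  induction w with
  | zero => simp
  | succ w ih =>
    have h2 : 2 * (w + 1) = (2 * w) + 1 + 1 := by ring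
    rw [h2, sum_range_succ, sum_range_succ, ih, sum_range_succ, mul_add]
    have e1 : (r ^ 2) ^ w = r ^ (2 * w) := by rw [← pow_mul]
    have e2 : r ^ (2 * w + 1) = r ^ (2 * w) * r := by rw [pow_succ]
    rw [e1, e2]
    ring

lemma geom_split (r j t : ℕ) :
    ∑ i ∈ range (j + t), r ^ i = (∑ i ∈ range j, r ^ i) + r ^ j * ∑ i ∈ range t, r ^ i := by
  rw [Finset.sum_range_add, Finset.mul_sum]
  congr 1
  exact sum_congr rfl fun i _ => pow_add r j i

lemma sigma_pp_parity {p : ℕ} (hp : p.Prime) (hp2 : p % 2 = 1) (k : ℕ) :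
    σ₁ (p ^ k) % 2 = (k + 1) % 2 := by
  rw [sigma_pp hp, Finset.sum_nat_mod]
  have h : ∀ i ∈ range (k + 1), p ^ i % 2 = 1 := fun i _ => by
    simp [Nat.pow_mod, hp2]
  rw [Finset.sum_congr rfl h, Finset.sum_const, card_range, smul_eq_mul, mul_one]

lemma sigma_pp_ge {p : ℕ} (hp : p.Prime) {k : ℕ} (hk : 1 ≤ k) :
    p ^ k + 1 ≤ σ₁ (p ^ k) := by
  rw [sigma_pp hp, sum_range_succ]
  have h0 : (0 : ℕ) ∈ range k := mem_range.mpr hk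
  have h1 : (1 : ℕ) ≤ ∑ i ∈ range k, p ^ i := by
    have := Finset.single_le_sum (f := fun i => p ^ i) (fun i _ => Nat.zero_le _) h0
    simpa using this
  omega

lemma sigma_pos {m : ℕ} (hm : m ≠ 0) : 0 < σ₁ m := by
  rw [sigma_one_apply]
  apply Finset.sum_pos (fun i hi => Nat.pos_of_mem_divisors hi)
  exact ⟨1, Nat.one_mem_divisors.mpr hm⟩

lemma not_dvd_sigma_pp {r : ℕ} (hr : r.Prime) (a : ℕ) : ¬ r ∣ σ₁ (r ^ a) := by
  rw [sigma_pp hr, Finset.sum_range_succ']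
  intro hdvd
  have hT : r ∣ ∑ i ∈ range a, r ^ (i + 1) :=
    dvd_sum fun i _ => dvd_pow_self r (Nat.succ_ne_zero i)
  have h1 : r ∣ 1 := by
    have := (Nat.dvd_add_right hT).mp (by simpa using hdvd)
    simpa using this
  have h2 := Nat.dvd_one.mp h1
  have := hr.two_le
  omega

lemma sigma_prime {p : ℕ} (hp : p.Prime) : σ₁ p = p + 1 := by
  have h := sigma_pp hp 1
  rw [pow_one] at h
  rw [h, sum_range_succ, sum_range_succ]
  simp [add_comm]

lemma sigma_pp_mul {r : ℕ} (hr : r.Prime) (a : ℕ) :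
    σ₁ (r ^ a) * (r - 1) + 1 = r ^ (a + 1) := by
  rw [sigma_pp hr]
  exact geom_mul hr.one_lt.le (a + 1)

lemma sigma_component_dvd {m ℓ : ℕ} (hm : m ≠ 0) (hℓ : ℓ ∈ m.primeFactors) :
    σ₁ (ℓ ^ m.factorization ℓ) ∣ σ₁ m := by
  rw [isMultiplicative_sigma.multiplicative_factorization _ hm]
  exact Finset.dvd_prod_of_mem (fun p => σ₁ (p ^ m.factorization p))
    (by rwa [Nat.support_factorization])

lemma sigma_two_primes {p q : ℕ} (hp : p.Prime) (hq : q.Prime) (hpq : p ≠ q) :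
    σ₁ (p * q) = (p + 1) * (q + 1) := by
  rw [isMultiplicative_sigma.map_mul_of_coprime ((Nat.coprime_primes hp hq).mpr hpq),
    sigma_prime hp, sigma_prime hq]

lemma lte_pow_sub_one {p x : ℕ} (hp : p.Prime) (hp2 : p ≠ 2) (hx : 2 ≤ x)
    (hdvd : p ∣ x - 1) {n : ℕ} (hn : n ≠ 0) :
    padicValNat p (x ^ n - 1) = padicValNat p (x - 1) + padicValNat p n := by
  haveI : Fact p.Prime := ⟨hp⟩
  have hodd : Odd p := hp.odd_of_ne_two hp2
  have hx1 : ¬ p ∣ x := by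
    intro h
    have h1 : p ∣ x - (x - 1) := Nat.dvd_sub h hdvd
    rw [show x - (x - 1) = 1 by omega] at h1
    have := Nat.le_of_dvd one_pos h1
    have := hp.two_le
    omega
  have := padicValNat.pow_sub_pow (p := p) hodd (show (1 : ℕ) < x by omega)
    (by simpa using hdvd) hx1 hn
  simpa using this

lemma pow_eq_one_of_dvd_sub {ℓ r t : ℕ} (hr : 1 ≤ r) (h : ℓ ∣ r ^ t - 1) :
    (r : ZMod ℓ) ^ t = 1 := by
  have h1 : (1 : ℕ) ≤ r ^ t := Nat.one_le_pow _ _ (by omega)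
  have : ((r ^ t - 1 : ℕ) : ZMod ℓ) = 0 := (ZMod.natCast_eq_zero_iff _ _).mpr h
  rwa [Nat.cast_sub h1, Nat.cast_pow, Nat.cast_one, sub_eq_zero] at this

lemma dvd_sub_of_pow_eq_one {ℓ r t : ℕ} (hr : 1 ≤ r) (h : (r : ZMod ℓ) ^ t = 1) :
    ℓ ∣ r ^ t - 1 := by
  have h1 : (1 : ℕ) ≤ r ^ t := Nat.one_le_pow _ _ (by omega)
  rw [← ZMod.natCast_eq_zero_iff, Nat.cast_sub h1, Nat.cast_pow, Nat.cast_one,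
    sub_eq_zero]
  exact h

/-- Key component lemma: if `σ(ℓ^e) = r^c` and `ℓ^e` is the exact power of `ℓ`
dividing `σ(r^a)`, then `ℓ^(e-1) ∣ a+1`. -/
lemma lemA {ℓ r : ℕ} (hℓ : ℓ.Prime) (hr : r.Prime) (hℓ2 : ℓ ≠ 2) (hℓr : ℓ ≠ r)
    {e c a : ℕ} (he : 2 ≤ e) (hc : 1 ≤ c) (ha : 1 ≤ a)
    (h1 : σ₁ (ℓ ^ e) = r ^ c)
    (h2 : (σ₁ (r ^ a)).factorization ℓ = e) :
    ℓ ^ (e - 1) ∣ a + 1 := by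
  haveI : Fact ℓ.Prime := ⟨hℓ⟩
  have hr2 : 2 ≤ r := hr.two_le
  have hℓ1 : 2 ≤ ℓ := hℓ.two_le
  have hrc2 : 2 ≤ r ^ c := by
    calc 2 ≤ r := hr2
    _ = r ^ 1 := (pow_one r).symm
    _ ≤ r ^ c := Nat.pow_le_pow_right (by omega) hc
  -- r^c = 1 + ℓ * S₁ with ℓ ∤ S₁
  have hSsig : σ₁ (ℓ ^ e) = 1 + ℓ * ∑ i ∈ range e, ℓ ^ i := by
    rw [sigma_pp hℓ, Finset.sum_range_succ']
    rw [Finset.mul_sum]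
    simp [pow_succ, mul_comm, add_comm]
  set S₁ := ∑ i ∈ range e, ℓ ^ i with hS₁
  have hS₁nd : ¬ ℓ ∣ S₁ := by
    obtain ⟨e', rfl⟩ : ∃ e', e = e' + 1 := ⟨e - 1, by omega⟩
    rw [hS₁, Finset.sum_range_succ']
    intro h
    have hd : ℓ ∣ ∑ i ∈ range e', ℓ ^ (i + 1) :=
      dvd_sum fun i _ => dvd_pow_self ℓ (Nat.succ_ne_zero i)
    have h1' : ℓ ∣ 1 := by
      have := (Nat.dvd_add_right hd).mp (by simpa using h)
      simpa using this
    have := Nat.dvd_one.mp h1'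
    omega
  have hrc : r ^ c = 1 + ℓ * S₁ := by rw [← h1, hSsig]
  have hS₁0 : S₁ ≠ 0 := by
    intro h0
    rw [h0, mul_zero] at hrc
    omega
  have hv1 : (r ^ c - 1).factorization ℓ = 1 := by
    rw [show r ^ c - 1 = ℓ * S₁ by omega, Nat.factorization_mul (by omega) hS₁0]
    rw [Finsupp.add_apply, hℓ.factorization_self, Nat.factorization_eq_zero_of_not_dvd hS₁nd]
  -- order of r mod ℓ
  have hℓr' : ¬ ℓ ∣ r := fun h => hℓr ((Nat.prime_dvd_prime_iff_eq hℓ hr).mp h)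
  have hpow_c : (r : ZMod ℓ) ^ c = 1 :=
    pow_eq_one_of_dvd_sub (by omega) (by rw [show r ^ c - 1 = ℓ * S₁ by omega]; exact dvd_mul_right _ _)
  set d := orderOf (r : ZMod ℓ) with hd
  have hfin : IsOfFinOrder (r : ZMod ℓ) := isOfFinOrder_iff_pow_eq_one.mpr ⟨c, hc, hpow_c⟩
  have hd0 : 0 < d := hfin.orderOf_pos
  have hdc : d ∣ c := orderOf_dvd_of_pow_eq_one hpow_c
  -- σ(r^a) and r^(a+1) - 1
  have hE : σ₁ (r ^ a) * (r - 1) + 1 = r ^ (a + 1) := sigma_pp_mul hr a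
  have hσ0 : σ₁ (r ^ a) ≠ 0 := (sigma_pos (pow_ne_zero a (by omega))).ne'
  have hℓσ : ℓ ∣ σ₁ (r ^ a) := Nat.dvd_of_factorization_pos (by rw [h2]; omega)
  have hsub_a : r ^ (a + 1) - 1 = σ₁ (r ^ a) * (r - 1) := by
    rw [← hE, Nat.add_sub_cancel]
  have hdvd_a1 : ℓ ∣ r ^ (a + 1) - 1 := by rw [hsub_a]; exact hℓσ.mul_right _
  have hpow_a : (r : ZMod ℓ) ^ (a + 1) = 1 := pow_eq_one_of_dvd_sub (by omega) hdvd_a1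
  have hda : d ∣ a + 1 := orderOf_dvd_of_pow_eq_one hpow_a
  -- base r^d
  have hBdvd : ℓ ∣ r ^ d - 1 := dvd_sub_of_pow_eq_one (by omega) (pow_orderOf_eq_one _)
  have hB2 : 2 ≤ r ^ d := by
    calc 2 ≤ r := hr2
    _ = r ^ 1 := (pow_one r).symm
    _ ≤ r ^ d := Nat.pow_le_pow_right (by omega) hd0
  have key : ∀ t : ℕ, t ≠ 0 → d ∣ t →
      (r ^ t - 1).factorization ℓ
        = (r ^ d - 1).factorization ℓ + (t / d).factorization ℓ := by
    rintro t ht ⟨s, rfl⟩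
    have hs0 : s ≠ 0 := by rintro rfl; simp at ht
    rw [Nat.factorization_def _ hℓ, Nat.factorization_def _ hℓ, Nat.factorization_def _ hℓ,
      Nat.mul_div_cancel_left _ hd0, pow_mul]
    exact lte_pow_sub_one hℓ hℓ2 hB2 hBdvd hs0
  have hv_rc := key c (by omega) hdc
  rw [hv1] at hv_rc
  have hG1 : 1 ≤ (r ^ d - 1).factorization ℓ :=
    (Nat.Prime.factorization_pos_of_dvd hℓ (by omega) hBdvd)
  have hG : (r ^ d - 1).factorization ℓ = 1 := by omega
  have hv_a := key (a + 1) (by omega) hda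
  rw [hG] at hv_a
  have hfac : (r ^ (a + 1) - 1).factorization ℓ = e + (r - 1).factorization ℓ := by
    rw [hsub_a, Nat.factorization_mul hσ0 (by omega : r - 1 ≠ 0), Finsupp.add_apply, h2]
  by_cases hd1 : d = 1
  · have hGr : (r - 1).factorization ℓ = 1 := by
      rw [hd1, pow_one] at hG; exact hG
    have hva1 : (a + 1).factorization ℓ = e := by
      rw [hd1, Nat.div_one] at hv_a
      omega
    have h1e : ℓ ^ (e - 1) ∣ ℓ ^ e := pow_dvd_pow _ (by omega)
    exact h1e.trans ((hℓ.pow_dvd_iff_le_factorization (by omega)).mpr (by omega))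
  · have hnd : ¬ ℓ ∣ r - 1 := by
      intro hcon
      have h1r : (r : ZMod ℓ) = 1 := by
        have h := (ZMod.natCast_eq_zero_iff (r - 1) ℓ).mpr hcon
        rwa [Nat.cast_sub (by omega : 1 ≤ r), Nat.cast_one, sub_eq_zero] at h
      exact hd1 (by rw [hd, h1r, orderOf_one])
    have hvr1 : (r - 1).factorization ℓ = 0 := Nat.factorization_eq_zero_of_not_dvd hnd
    have hvad : ((a + 1) / d).factorization ℓ = e - 1 := by omega
    have hne0 : (a + 1) / d ≠ 0 := by
      have := Nat.le_of_dvd (by omega) hda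
      have := Nat.div_pos this hd0
      omega
    have hdvd' : ℓ ^ (e - 1) ∣ (a + 1) / d :=
      (hℓ.pow_dvd_iff_le_factorization hne0).mpr (by omega)
    exact hdvd'.trans (Nat.div_dvd_of_dvd hda)

lemma L1 {a : ℕ} (ha : 3 ≤ a) : 2 * (a + 1) ^ 2 < 5 ^ a := by
  induction a, ha using Nat.le_induction with
  | base => norm_num
  | succ n hn ih =>
    have h1 : n + 1 + 1 ≤ 2 * (n + 1) := by omega
    have h2 : (n + 1 + 1) ^ 2 ≤ (2 * (n + 1)) ^ 2 := Nat.pow_le_pow_left h1 2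
    have h3 : (2 * (n + 1)) ^ 2 = 4 * (n + 1) ^ 2 := by ring
    have h5 : 0 < 5 ^ n := Nat.pow_pos (by norm_num)
    calc 2 * (n + 1 + 1) ^ 2 ≤ 2 * (4 * (n + 1) ^ 2) := by omega
    _ = 4 * (2 * (n + 1) ^ 2) := by ring
    _ < 4 * 5 ^ n := by omega
    _ < 5 * 5 ^ n := by omega
    _ = 5 ^ (n + 1) := by rw [pow_succ]; ring

lemma L2 {a : ℕ} (ha : 10 ≤ a) : 4 * (a + 1) ^ 4 ≤ 3 ^ a := by
  induction a, ha using Nat.le_induction with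
  | base => norm_num
  | succ n hn ih =>
    have h1 : 11 * (n + 1 + 1) ≤ 12 * (n + 1) := by omega
    have h2 : (11 * (n + 1 + 1)) ^ 4 ≤ (12 * (n + 1)) ^ 4 := Nat.pow_le_pow_left h1 4
    have h3 : (11 * (n + 1 + 1)) ^ 4 = 14641 * (n + 1 + 1) ^ 4 := by ring
    have h4 : (12 * (n + 1)) ^ 4 = 20736 * (n + 1) ^ 4 := by ring
    rw [h3, h4] at h2
    have h5 : 14641 * (4 * (n + 1 + 1) ^ 4) ≤ 14641 * 3 ^ (n + 1) := by
      calc 14641 * (4 * (n + 1 + 1) ^ 4) = 4 * (14641 * (n + 1 + 1) ^ 4) := by ring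
      _ ≤ 4 * (20736 * (n + 1) ^ 4) := by omega
      _ = 20736 * (4 * (n + 1) ^ 4) := by ring
      _ ≤ 20736 * 3 ^ n := Nat.mul_le_mul_left _ ih
      _ ≤ 43923 * 3 ^ n := by omega
      _ = 14641 * 3 ^ (n + 1) := by rw [pow_succ]; ring
    exact Nat.le_of_mul_le_mul_left h5 (by norm_num)

/-- Impossibility of the case `k = 1`: `σ(m) = r^a`, `σ(r^a) = 2m`. -/
lemma k1_impossible {r a m : ℕ} (hr : r.Prime) (hr2 : r ≠ 2) (ha : 1 ≤ a)
    (hmo : m % 2 = 1) (h1 : σ₁ m = r ^ a) (h2 : σ₁ (r ^ a) = 2 * m) : False := by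
  have hm0 : m ≠ 0 := by omega
  have hrodd : r % 2 = 1 := Nat.odd_iff.mp (hr.odd_of_ne_two hr2)
  have hrr2 : 2 ≤ r := hr.two_le
  have ha_odd : a % 2 = 1 := by
    have := sigma_pp_parity hr hrodd a
    omega
  have hr4 : r % 4 = 1 := by
    by_contra hcon
    have hr43 : r % 4 = 3 := by omega
    obtain ⟨w, hw⟩ : ∃ w, a + 1 = 2 * w := ⟨(a + 1) / 2, by omega⟩
    have hps : σ₁ (r ^ a) = (1 + r) * ∑ i ∈ range w, (r ^ 2) ^ i := by
      rw [sigma_pp hr, hw, geom_pair]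
    have h4 : 4 ∣ 1 + r := by omega
    have h4' : (4 : ℕ) ∣ 2 * m := by
      rw [← h2, hps]
      exact h4.mul_right _
    omega
  have hr5 : 5 ≤ r := by omega
  have hm1 : m ≠ 1 := by
    rintro rfl
    have : σ₁ 1 = 1 := isMultiplicative_sigma.map_one
    rw [this] at h1
    have : r ≤ r ^ a := Nat.le_self_pow (by omega) r
    omega
  have hrm : ¬ r ∣ m := by
    intro hcon
    exact not_dvd_sigma_pp hr a (h2 ▸ hcon.mul_left 2)
  have hcomp : ∀ ℓ ∈ m.primeFactors,
      2 ≤ m.factorization ℓ ∧ ℓ ^ (m.factorization ℓ - 1) ∣ a + 1 := by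
    intro ℓ hℓmem
    obtain ⟨hℓp, hℓdvd, -⟩ := Nat.mem_primeFactors.mp hℓmem
    have he1 : 1 ≤ m.factorization ℓ := hℓp.factorization_pos_of_dvd hm0 hℓdvd
    have hℓ2 : ℓ ≠ 2 := by
      rintro rfl
      obtain ⟨s, rfl⟩ := hℓdvd
      omega
    have hℓodd : ℓ % 2 = 1 := Nat.odd_iff.mp (hℓp.odd_of_ne_two hℓ2)
    have hℓr : ℓ ≠ r := by rintro rfl; exact hrm hℓdvd
    have hσdvd : σ₁ (ℓ ^ m.factorization ℓ) ∣ r ^ a := h1 ▸ sigma_component_dvd hm0 hℓmem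
    obtain ⟨c, hca, hc⟩ := (Nat.dvd_prime_pow hr).mp hσdvd
    have hσge : ℓ ^ m.factorization ℓ + 1 ≤ σ₁ (ℓ ^ m.factorization ℓ) := sigma_pp_ge hℓp he1
    have hℓe2 : 2 ≤ ℓ ^ m.factorization ℓ := by
      calc 2 ≤ ℓ := hℓp.two_le
      _ = ℓ ^ 1 := (pow_one ℓ).symm
      _ ≤ ℓ ^ m.factorization ℓ := Nat.pow_le_pow_right (by have := hℓp.two_le; omega) he1
    have hc1 : 1 ≤ c := by
      rcases Nat.eq_zero_or_pos c with h0 | h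
      · rw [h0, pow_zero] at hc; omega
      · exact h
    have heeven : m.factorization ℓ % 2 = 0 := by
      have hpar := sigma_pp_parity hℓp hℓodd (m.factorization ℓ)
      have hrc : r ^ c % 2 = 1 := by simp [Nat.pow_mod, hrodd]
      omega
    have he2 : 2 ≤ m.factorization ℓ := by omega
    have hv : (σ₁ (r ^ a)).factorization ℓ = m.factorization ℓ := by
      rw [h2, Nat.factorization_mul two_ne_zero hm0, Finsupp.add_apply,
        Nat.factorization_eq_zero_of_not_dvd (fun hdd => hℓ2 (Nat.le_antisymm (Nat.le_of_dvd (by norm_num) hdd) hℓp.two_le))]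
      omega
    exact ⟨he2, lemA hℓp hr hℓ2 hℓr he2 hc1 ha hc hv⟩
  have hma : m ∣ (a + 1) ^ 2 := by
    rw [← Nat.factorization_le_iff_dvd hm0 (by positivity)]
    refine Finsupp.le_def.mpr fun p => ?_
    by_cases hp : p ∈ m.primeFactors
    · obtain ⟨he2, hdvd'⟩ := hcomp p hp
      obtain ⟨hpp, -, -⟩ := Nat.mem_primeFactors.mp hp
      have hle : m.factorization p - 1 ≤ (a + 1).factorization p :=
        (hpp.pow_dvd_iff_le_factorization (by omega)).mp hdvd'
      rw [Nat.factorization_pow, Finsupp.smul_apply, smul_eq_mul]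
      omega
    · have h0 : m.factorization p = 0 := by
        rwa [← Nat.support_factorization, Finsupp.notMem_support_iff] at hp
      omega
  have hmle : m ≤ (a + 1) ^ 2 := Nat.le_of_dvd (by positivity) hma
  have hlow : r ^ a < 2 * m := by
    have := sigma_pp_ge hr ha
    omega
  have hfin : r ^ a < 2 * (a + 1) ^ 2 := by omega
  by_cases ha1 : a = 1
  · subst ha1
    have hr5' : r = 5 := by
      rw [pow_one] at hfin
      omega
    subst hr5'
    rw [pow_one] at h2 h1
    rw [sigma_prime hr] at h2
    have hm3 : m = 3 := by omega
    rw [hm3, sigma_prime (by norm_num)] at h1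
    omega
  · have ha3 : 3 ≤ a := by omega
    have hL1 := L1 ha3
    have h5r : 5 ^ a ≤ r ^ a := Nat.pow_le_pow_left hr5 a
    omega


lemma sigma_pow_val {r a v : ℕ} (hr : r.Prime) (hv : v * (r - 1) + 1 = r ^ (a + 1)) :
    σ₁ (r ^ a) = v := by
  have h := sigma_pp_mul hr a
  have h1 : 1 ≤ r - 1 := by have := hr.two_le; omega
  have h2 : σ₁ (r ^ a) * (r - 1) = v * (r - 1) := by omega
  exact Nat.eq_of_mul_eq_mul_right (by omega) h2

lemma num_endgame {r a : ℕ} (hr : r.Prime) (hr3 : 3 ≤ r) (ha2 : 2 ≤ a) (haE : a % 2 = 0)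
    (hC : r ^ a < 4 * (a + 1) ^ 4) (h2 : σ₁ (σ₁ (r ^ a)) = 2 * r ^ a) : False := by
  have ha9 : a < 10 := by
    by_contra hcon
    push_neg at hcon
    have hL2 := L2 hcon
    have h3r : 3 ^ a ≤ r ^ a := Nat.pow_le_pow_left hr3 a
    omega
  have hbound : ∀ b : ℕ, r ^ a < b ^ a → r < b := by
    intro b hb
    by_contra hcon
    push_neg at hcon
    exact absurd (Nat.pow_le_pow_left hcon a) (by omega)
  interval_cases a
  · -- a = 2
    have hrlt : r < 18 := hbound 18 (by omega)
    interval_cases r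
    · have hm : σ₁ ((3:ℕ) ^ 2) = 13 := sigma_pow_val hr (by norm_num)
      rw [hm, sigma_prime (by norm_num)] at h2
      norm_num at h2
    · exact absurd hr (by norm_num)
    · have hm : σ₁ ((5:ℕ) ^ 2) = 31 := sigma_pow_val hr (by norm_num)
      rw [hm, sigma_prime (by norm_num)] at h2
      norm_num at h2
    · exact absurd hr (by norm_num)
    · have hm : σ₁ ((7:ℕ) ^ 2) = 57 := sigma_pow_val hr (by norm_num)
      rw [hm, show (57:ℕ) = 3 * 19 by norm_num,
        sigma_two_primes (by norm_num) (by norm_num) (by norm_num)] at h2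
      norm_num at h2
    · exact absurd hr (by norm_num)
    · exact absurd hr (by norm_num)
    · exact absurd hr (by norm_num)
    · have hm : σ₁ ((11:ℕ) ^ 2) = 133 := sigma_pow_val hr (by norm_num)
      rw [hm, show (133:ℕ) = 7 * 19 by norm_num,
        sigma_two_primes (by norm_num) (by norm_num) (by norm_num)] at h2
      norm_num at h2
    · exact absurd hr (by norm_num)
    · have hm : σ₁ ((13:ℕ) ^ 2) = 183 := sigma_pow_val hr (by norm_num)
      rw [hm, show (183:ℕ) = 3 * 61 by norm_num,
        sigma_two_primes (by norm_num) (by norm_num) (by norm_num)] at h2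
      norm_num at h2
    · exact absurd hr (by norm_num)
    · exact absurd hr (by norm_num)
    · exact absurd hr (by norm_num)
    · have hm : σ₁ ((17:ℕ) ^ 2) = 307 := sigma_pow_val hr (by norm_num)
      rw [hm, sigma_prime (by norm_num)] at h2
      norm_num at h2
  · omega
  · -- a = 4
    have hrlt : r < 8 := hbound 8 (by omega)
    interval_cases r
    · have hm : σ₁ ((3:ℕ) ^ 4) = 121 := sigma_pow_val hr (by norm_num)
      have hm2 : σ₁ ((11:ℕ) ^ 2) = 133 := sigma_pow_val (by norm_num) (by norm_num)
      rw [hm, show (121:ℕ) = 11 ^ 2 by norm_num, hm2] at h2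
      norm_num at h2
    · exact absurd hr (by norm_num)
    · have hm : σ₁ ((5:ℕ) ^ 4) = 781 := sigma_pow_val hr (by norm_num)
      rw [hm, show (781:ℕ) = 11 * 71 by norm_num,
        sigma_two_primes (by norm_num) (by norm_num) (by norm_num)] at h2
      norm_num at h2
    · exact absurd hr (by norm_num)
    · have hm : σ₁ ((7:ℕ) ^ 4) = 2801 := sigma_pow_val hr (by norm_num)
      rw [hm, sigma_prime (by norm_num)] at h2
      norm_num at h2
  · omega
  · -- a = 6
    have hrlt : r < 5 := hbound 5 (by omega)
    interval_cases r
    · have hm : σ₁ ((3:ℕ) ^ 6) = 1093 := sigma_pow_val hr (by norm_num)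
      rw [hm, sigma_prime (by norm_num)] at h2
      norm_num at h2
    · exact absurd hr (by norm_num)
  · omega
  · -- a = 8
    have hrlt : r < 4 := hbound 4 (by omega)
    interval_cases r
    · have hm : σ₁ ((3:ℕ) ^ 8) = 9841 := sigma_pow_val hr (by norm_num)
      rw [hm, show (9841:ℕ) = 13 * 757 by norm_num,
        sigma_two_primes (by norm_num) (by norm_num) (by norm_num)] at h2
      norm_num at h2
  · omega

/-- Impossibility of the case `k = 2`: `σ(σ(r^a)) = 2 r^a` with `σ(r^a)` odd. -/
lemma k2_impossible {r a : ℕ} (hr : r.Prime) (hr2 : r ≠ 2) (ha : 1 ≤ a)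
    (hMo : σ₁ (r ^ a) % 2 = 1) (h2 : σ₁ (σ₁ (r ^ a)) = 2 * r ^ a) : False := by
  have hrodd : r % 2 = 1 := Nat.odd_iff.mp (hr.odd_of_ne_two hr2)
  have hrr2 : 2 ≤ r := hr.two_le
  have hr3 : 3 ≤ r := by omega
  set M := σ₁ (r ^ a) with hM
  have haE : a % 2 = 0 := by
    have := sigma_pp_parity hr hrodd a
    omega
  have ha2 : 2 ≤ a := by omega
  have hra0 : r ^ a ≠ 0 := pow_ne_zero _ (by omega)
  have hMge : r ^ a + 1 ≤ M := sigma_pp_ge hr ha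
  have hra2 : 2 ≤ r ^ a := by
    calc 2 ≤ r := hrr2
    _ = r ^ 1 := (pow_one r).symm
    _ ≤ r ^ a := Nat.pow_le_pow_right (by omega) ha
  have hM0 : M ≠ 0 := by omega
  have hrM : ¬ r ∣ M := not_dvd_sigma_pp hr a
  -- the product formula and 2-adic valuations of components
  have hfac0 : ∀ p ∈ M.primeFactors, σ₁ (p ^ M.factorization p) ≠ 0 := by
    intro p hp
    have hp0 : p ≠ 0 := (Nat.mem_primeFactors.mp hp).1.ne_zero
    exact (sigma_pos (pow_ne_zero _ hp0)).ne'
  have hprod : σ₁ M = ∏ p ∈ M.primeFactors, σ₁ (p ^ M.factorization p) :=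
    isMultiplicative_sigma.multiplicative_factorization _ hM0
  have hv2sum : ∑ p ∈ M.primeFactors, (σ₁ (p ^ M.factorization p)).factorization 2 = 1 := by
    have hfp := Nat.factorization_prod hfac0
    have happ : (∏ p ∈ M.primeFactors, σ₁ (p ^ M.factorization p)).factorization 2
        = ∑ p ∈ M.primeFactors, (σ₁ (p ^ M.factorization p)).factorization 2 := by
      rw [hfp, Finset.sum_apply']
    rw [← happ, ← hprod, h2, Nat.factorization_mul two_ne_zero hra0, Finsupp.add_apply,
      Nat.Prime.factorization_self Nat.prime_two,
      Nat.factorization_eq_zero_of_not_dvd (?_ : ¬ (2:ℕ) ∣ r ^ a)]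
    have hra_odd : r ^ a % 2 = 1 := by simp [Nat.pow_mod, hrodd]
    omega
  -- locate the unique component with even sigma
  obtain ⟨q, hqmem, hq2ne⟩ : ∃ q ∈ M.primeFactors,
      (σ₁ (q ^ M.factorization q)).factorization 2 ≠ 0 := by
    by_contra hcon
    push_neg at hcon
    rw [Finset.sum_eq_zero hcon] at hv2sum
    omega
  have hq2 : (σ₁ (q ^ M.factorization q)).factorization 2 = 1 := by
    have hle := Finset.single_le_sum
      (f := fun p => (σ₁ (p ^ M.factorization p)).factorization 2)
      (fun _ _ => Nat.zero_le _) hqmem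
    omega
  have hothers : ∀ p ∈ M.primeFactors, p ≠ q →
      (σ₁ (p ^ M.factorization p)).factorization 2 = 0 := by
    intro p hpmem hpq
    by_contra hcon
    have hsub : {q, p} ⊆ M.primeFactors := by
      intro x hx
      rcases Finset.mem_insert.mp hx with rfl | hx
      · exact hqmem
      · rw [Finset.mem_singleton.mp hx]; exact hpmem
    have hle := Finset.sum_le_sum_of_subset
      (f := fun p => (σ₁ (p ^ M.factorization p)).factorization 2) hsub
    rw [Finset.sum_insert (by simp [Ne.symm hpq])] at hle
    rw [Finset.sum_singleton] at hle
    omega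
  obtain ⟨hqp, hqdvdM, -⟩ := Nat.mem_primeFactors.mp hqmem
  have hqodd : q % 2 = 1 := by
    by_contra hcon
    have h2q : (2:ℕ) ∣ q := by omega
    have h2M : (2:ℕ) ∣ M := h2q.trans hqdvdM
    omega
  set eq₀ := M.factorization q with heq₀
  have heq1 : 1 ≤ eq₀ := hqp.factorization_pos_of_dvd hM0 hqdvdM
  have hq3 : 3 ≤ q := by have := hqp.two_le; omega
  have hσq0 : σ₁ (q ^ eq₀) ≠ 0 := hfac0 q hqmem
  have hσq_dvd : σ₁ (q ^ eq₀) ∣ 2 * r ^ a := h2 ▸ sigma_component_dvd hM0 hqmem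
  have h2dvdσ : 2 ∣ σ₁ (q ^ eq₀) := Nat.dvd_of_factorization_pos (by rw [hq2]; omega)
  obtain ⟨t, ht⟩ := h2dvdσ
  have ht0 : t ≠ 0 := by rintro rfl; rw [mul_zero] at ht; exact hσq0 ht
  have htodd : ¬ 2 ∣ t := by
    intro hcon
    have hv2t : 1 ≤ t.factorization 2 :=
      Nat.Prime.factorization_pos_of_dvd Nat.prime_two ht0 hcon
    have hv2σ : (σ₁ (q ^ eq₀)).factorization 2 = 1 + t.factorization 2 := by
      rw [ht, Nat.factorization_mul two_ne_zero ht0, Finsupp.add_apply,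
        Nat.Prime.factorization_self Nat.prime_two]
    omega
  have htdvd : t ∣ r ^ a := by
    have h2t : 2 * t ∣ 2 * r ^ a := ht ▸ hσq_dvd
    exact (mul_dvd_mul_iff_left (two_ne_zero)).mp h2t
  obtain ⟨j, hja', hj⟩ := (Nat.dvd_prime_pow hr).mp htdvd
  have hσqval : σ₁ (q ^ eq₀) = 2 * r ^ j := by rw [ht, hj]
  have hσgeq := sigma_pp_ge hqp heq1
  have hqle : q ≤ q ^ eq₀ := Nat.le_self_pow (by omega) q
  have hj1 : 1 ≤ j := by
    by_contra hcon
    have hj0 : j = 0 := by omega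
    rw [hj0, pow_zero, mul_one] at hσqval
    omega
  have heqodd : eq₀ % 2 = 1 := by
    have hpar := sigma_pp_parity hqp hqodd eq₀
    omega
  obtain ⟨w, hw⟩ : ∃ w, eq₀ + 1 = 2 * w := ⟨(eq₀ + 1) / 2, by omega⟩
  have hw1 : 1 ≤ w := by omega
  have hTdef : σ₁ (q ^ eq₀) = (1 + q) * ∑ i ∈ range w, (q ^ 2) ^ i := by
    rw [sigma_pp hqp, hw, geom_pair]
  set T := ∑ i ∈ range w, (q ^ 2) ^ i with hT
  have hq4 : q % 4 = 1 := by
    by_contra hcon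
    have h4 : 4 ∣ 1 + q := by omega
    have h4' : (4:ℕ) ∣ 2 * r ^ j := by rw [← hσqval, hTdef]; exact h4.mul_right _
    have hrj_odd : r ^ j % 2 = 1 := by simp [Nat.pow_mod, hrodd]
    omega
  have hq5 : 5 ≤ q := by omega
  obtain ⟨x, hx⟩ : ∃ x, q + 1 = 2 * x := ⟨(q + 1) / 2, by omega⟩
  have hxT : x * T = r ^ j := by
    have h1' : 2 * (x * T) = 2 * r ^ j := by
      calc 2 * (x * T) = (2 * x) * T := by ring
      _ = (q + 1) * T := by rw [hx]
      _ = (1 + q) * T := by ring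
      _ = 2 * r ^ j := by rw [← hTdef, hσqval]
    omega
  have hxdvd : x ∣ r ^ j := ⟨T, hxT.symm⟩
  obtain ⟨j₁, hj₁le, hj₁⟩ := (Nat.dvd_prime_pow hr).mp hxdvd
  have hj₁1 : 1 ≤ j₁ := by
    have hx3 : 3 ≤ x := by omega
    by_contra hcon
    have hjj : j₁ = 0 := by omega
    rw [hjj, pow_zero] at hj₁
    omega
  have hqr : q ≠ r := by rintro rfl; exact hrM hqdvdM
  have hrdvdq1 : r ∣ q + 1 := by
    rw [hx, hj₁]
    exact Dvd.dvd.mul_left (dvd_pow_self r (by omega)) 2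
  have hTdvd : T ∣ r ^ j := ⟨x, by rw [mul_comm]; exact hxT.symm⟩
  obtain ⟨j₂, hj₂le, hj₂⟩ := (Nat.dvd_prime_pow hr).mp hTdvd
  have heqq1 : eq₀ = 1 := by
    by_contra hne
    obtain ⟨w', rfl⟩ : ∃ w', w = w' + 1 := ⟨w - 1, by omega⟩
    have hw2 : 1 ≤ w' := by omega
    have hq2ge : 2 ≤ q ^ 2 := by
      calc 2 ≤ q := by omega
      _ ≤ q ^ 2 := Nat.le_self_pow (by norm_num) q
    have hq21 : q ^ 2 - 1 = (q + 1) * (q - 1) := by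
      obtain ⟨q', rfl⟩ : ∃ q', q = q' + 1 := ⟨q - 1, by omega⟩
      have hexp : (q' + 1) ^ 2 = q' * q' + 2 * q' + 1 := by ring
      have hexp2 : (q' + 1 + 1) * (q' + 1 - 1) = q' * q' + 2 * q' := by
        simp only [Nat.add_sub_cancel]
        ring
      omega
    have hrdvdq2 : r ∣ q ^ 2 - 1 := by
      rw [hq21]
      exact hrdvdq1.mul_right _
    have hT_eq : T * (q ^ 2 - 1) + 1 = (q ^ 2) ^ (w' + 1) := geom_mul (by omega) (w' + 1)
    have hlte := lte_pow_sub_one hr hr2 hq2ge hrdvdq2 (show w' + 1 ≠ 0 by omega)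
    rw [← Nat.factorization_def _ hr, ← Nat.factorization_def _ hr,
      ← Nat.factorization_def _ hr] at hlte
    have hsubT : (q ^ 2) ^ (w' + 1) - 1 = T * (q ^ 2 - 1) := by omega
    rw [hsubT] at hlte
    have hT0 : T ≠ 0 := by
      rintro h0
      rw [h0, mul_zero] at hxT
      have : 0 < r ^ j := pow_pos (by omega) j
      omega
    have hq210 : q ^ 2 - 1 ≠ 0 := by omega
    rw [Nat.factorization_mul hT0 hq210, Finsupp.add_apply] at hlte
    have hvT : T.factorization r = j₂ := by
      rw [hj₂, hr.factorization_pow, Finsupp.single_eq_same]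
    have hrj₂dvd : r ^ j₂ ∣ w' + 1 :=
      (hr.pow_dvd_iff_le_factorization (by omega)).mpr (by omega)
    have hTlew : T ≤ w' + 1 := by
      have := Nat.le_of_dvd (by omega) hrj₂dvd
      omega
    have hTge : 1 + w' * q ^ 2 ≤ T := by
      rw [hT, Finset.sum_range_succ']
      simp only [pow_zero]
      have hterm : ∀ i ∈ range w', q ^ 2 ≤ (q ^ 2) ^ (i + 1) :=
        fun i _ => Nat.le_self_pow (Nat.succ_ne_zero i) _
      have hsum : w' * q ^ 2 ≤ ∑ i ∈ range w', (q ^ 2) ^ (i + 1) := by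
        calc w' * q ^ 2 = ∑ _i ∈ range w', q ^ 2 := by
              rw [Finset.sum_const, card_range, smul_eq_mul]
        _ ≤ _ := Finset.sum_le_sum hterm
      omega
    have h25 : 25 ≤ q ^ 2 := by
      calc 25 = 5 * 5 := rfl
      _ ≤ q * q := Nat.mul_le_mul hq5 hq5
      _ = q ^ 2 := (sq q).symm
    have hmul : 25 * w' ≤ w' * q ^ 2 := by
      calc 25 * w' = w' * 25 := by ring
      _ ≤ w' * q ^ 2 := Nat.mul_le_mul_left _ h25
    omega
  rw [heqq1, pow_one] at hσqval
  have hq1' : q + 1 = 2 * r ^ j := by rw [← sigma_prime hqp]; exact hσqval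
  obtain ⟨u, hMqu⟩ := hqdvdM
  have hqdvdM : q ∣ M := ⟨u, hMqu⟩
  have hqu : ¬ q ∣ u := by
    intro hcon
    obtain ⟨s, hs⟩ := hcon
    have hq2dvd : q ^ 2 ∣ M := ⟨s, by rw [hMqu, hs]; ring⟩
    have := (hqp.pow_dvd_iff_le_factorization hM0).mp hq2dvd
    omega
  have hu0 : u ≠ 0 := by
    intro h0
    rw [h0, mul_zero] at hMqu
    exact hM0 hMqu
  have hudvdM : u ∣ M := ⟨q, by rw [hMqu]; ring⟩
  have huodd : u % 2 = 1 := by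
    by_contra hcon
    have h2u : (2:ℕ) ∣ u := by omega
    have h2M : (2:ℕ) ∣ M := h2u.trans hudvdM
    omega
  have hcopqu : Nat.Coprime q u := (Nat.Prime.coprime_iff_not_dvd hqp).mpr hqu
  have hσM : σ₁ M = σ₁ q * σ₁ u := by
    rw [hMqu]; exact isMultiplicative_sigma.map_mul_of_coprime hcopqu
  have hσu_eq : 2 * r ^ j * σ₁ u = 2 * r ^ a := by
    rw [← hσqval, ← hσM]; exact h2
  have hσu0 : σ₁ u ≠ 0 := (sigma_pos hu0).ne'
  have hja : j ≤ a := by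
    by_contra hcon
    push_neg at hcon
    have hpow : r ^ a < r ^ j := Nat.pow_lt_pow_right (by omega) hcon
    have h1u : 1 ≤ σ₁ u := by omega
    have hle2 : 2 * r ^ j ≤ 2 * r ^ j * σ₁ u := Nat.le_mul_of_pos_right _ (by omega)
    omega
  have hσu : σ₁ u = r ^ (a - j) := by
    have hsplit : r ^ a = r ^ j * r ^ (a - j) := by rw [← pow_add]; congr 1; omega
    have h2' : 2 * r ^ j * σ₁ u = 2 * r ^ j * r ^ (a - j) := by
      calc 2 * r ^ j * σ₁ u = 2 * r ^ a := hσu_eq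
      _ = 2 * r ^ j * r ^ (a - j) := by rw [hsplit]; ring
    have hpos : 0 < 2 * r ^ j := by positivity
    exact Nat.eq_of_mul_eq_mul_left hpos h2'
  have hucomp : ∀ ℓ ∈ u.primeFactors,
      2 ≤ u.factorization ℓ ∧ ℓ ^ (u.factorization ℓ - 1) ∣ a + 1 := by
    intro ℓ hℓmem
    obtain ⟨hℓp, hℓdvdu, -⟩ := Nat.mem_primeFactors.mp hℓmem
    have hℓdvdM : ℓ ∣ M := hℓdvdu.trans hudvdM
    have hℓq : ℓ ≠ q := by rintro rfl; exact hqu hℓdvdu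
    have hℓmemM : ℓ ∈ M.primeFactors := Nat.mem_primeFactors.mpr ⟨hℓp, hℓdvdM, hM0⟩
    have hvℓ : M.factorization ℓ = u.factorization ℓ := by
      rw [hMqu, Nat.factorization_mul hqp.ne_zero hu0, Finsupp.add_apply,
        Nat.factorization_eq_zero_of_not_dvd
          (fun hdd => hℓq ((Nat.prime_dvd_prime_iff_eq hℓp hqp).mp hdd))]
      omega
    have he1 : 1 ≤ u.factorization ℓ := hℓp.factorization_pos_of_dvd hu0 hℓdvdu
    have hℓ2 : ℓ ≠ 2 := by
      rintro rfl
      have h2M : (2:ℕ) ∣ M := hℓdvdM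
      omega
    have hℓodd : ℓ % 2 = 1 := Nat.odd_iff.mp (hℓp.odd_of_ne_two hℓ2)
    have hℓr : ℓ ≠ r := by rintro rfl; exact hrM hℓdvdM
    have hσcomp_dvd : σ₁ (ℓ ^ M.factorization ℓ) ∣ 2 * r ^ a :=
      h2 ▸ sigma_component_dvd hM0 hℓmemM
    have hv2ℓ : (σ₁ (ℓ ^ M.factorization ℓ)).factorization 2 = 0 := hothers ℓ hℓmemM hℓq
    rw [hvℓ] at hσcomp_dvd hv2ℓ
    have hσℓ0 : σ₁ (ℓ ^ u.factorization ℓ) ≠ 0 := (sigma_pos (pow_ne_zero _ hℓp.ne_zero)).ne'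
    have hσodd : ¬ 2 ∣ σ₁ (ℓ ^ u.factorization ℓ) := by
      intro hcon
      have := Nat.Prime.factorization_pos_of_dvd Nat.prime_two hσℓ0 hcon
      omega
    have hσdvd' : σ₁ (ℓ ^ u.factorization ℓ) ∣ r ^ a := by
      have hcop2 : Nat.Coprime (σ₁ (ℓ ^ u.factorization ℓ)) 2 :=
        ((Nat.Prime.coprime_iff_not_dvd Nat.prime_two).mpr hσodd).symm
      have hd : σ₁ (ℓ ^ u.factorization ℓ) ∣ r ^ a * 2 := by rwa [mul_comm] at hσcomp_dvd
      exact hcop2.dvd_of_dvd_mul_right hd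
    obtain ⟨c, hca, hc⟩ := (Nat.dvd_prime_pow hr).mp hσdvd'
    have hσge := sigma_pp_ge hℓp he1
    have hℓe2 : 2 ≤ ℓ ^ u.factorization ℓ := by
      calc 2 ≤ ℓ := hℓp.two_le
      _ = ℓ ^ 1 := (pow_one ℓ).symm
      _ ≤ ℓ ^ u.factorization ℓ := Nat.pow_le_pow_right (by have := hℓp.two_le; omega) he1
    have hc1 : 1 ≤ c := by
      rcases Nat.eq_zero_or_pos c with h0 | h
      · rw [h0, pow_zero] at hc; omega
      · exact h
    have heeven : u.factorization ℓ % 2 = 0 := by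
      have hpar := sigma_pp_parity hℓp hℓodd (u.factorization ℓ)
      have hrc : r ^ c % 2 = 1 := by simp [Nat.pow_mod, hrodd]
      omega
    have he2 : 2 ≤ u.factorization ℓ := by omega
    have hv : (σ₁ (r ^ a)).factorization ℓ = u.factorization ℓ := by rw [← hM]; exact hvℓ
    exact ⟨he2, lemA hℓp hr hℓ2 hℓr he2 hc1 ha hc hv⟩
  have hua : u ∣ (a + 1) ^ 2 := by
    rw [← Nat.factorization_le_iff_dvd hu0 (by positivity)]
    refine Finsupp.le_def.mpr fun p => ?_
    by_cases hp : p ∈ u.primeFactors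
    · obtain ⟨he2, hdvd'⟩ := hucomp p hp
      obtain ⟨hpp, -, -⟩ := Nat.mem_primeFactors.mp hp
      have hle : u.factorization p - 1 ≤ (a + 1).factorization p :=
        (hpp.pow_dvd_iff_le_factorization (by omega)).mp hdvd'
      rw [Nat.factorization_pow, Finsupp.smul_apply, smul_eq_mul]
      omega
    · have h0 : u.factorization p = 0 := by
        rwa [← Nat.support_factorization, Finsupp.notMem_support_iff] at hp
      omega
  have hule : u ≤ (a + 1) ^ 2 := Nat.le_of_dvd (by positivity) hua
  by_cases hu1 : u = 1
  · have hMq : M = q := by rw [hMqu, hu1, mul_one]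
    have haj : a = j := by
      rw [hu1] at hσu
      have h1 : σ₁ 1 = 1 := isMultiplicative_sigma.map_one
      rw [h1] at hσu
      have haj0 : a - j = 0 := by
        by_contra hcon
        have : r ≤ r ^ (a - j) := Nat.le_self_pow hcon r
        omega
      omega
    have hkey : M + 1 = 2 * r ^ a := by rw [hMq, haj]; exact hq1'
    have hE := sigma_pp_mul hr a
    rw [← hM] at hE
    have hge : 1 ≤ r := by omega
    have hE2 : (M : ℤ) * ((r : ℤ) - 1) + 1 = (r : ℤ) ^ (a + 1) := by
      zify [hge] at hE
      exact hE
    have hkey2 : (M : ℤ) + 1 = 2 * (r : ℤ) ^ a := by exact_mod_cast hkey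
    have hpow : ((r : ℤ)) ^ (a + 1) = (r : ℤ) * (r : ℤ) ^ a := by rw [pow_succ]; ring
    have hE3 : (M : ℤ) * (r : ℤ) + 1 = (r : ℤ) * (r : ℤ) ^ a + M := by
      rw [hpow] at hE2
      linarith [hE2]
    have hfactor : ((r : ℤ) ^ a - 1) * ((r : ℤ) - 2) = 0 := by
      linear_combination hE3 - ((r : ℤ) - 1) * hkey2
    rcases mul_eq_zero.mp hfactor with h0 | h0
    · have hra1 : (r : ℤ) ^ a = 1 := by linarith
      have : r ^ a = 1 := by exact_mod_cast hra1
      omega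
    · have hr2' : (r : ℤ) = 2 := by linarith
      have : r = 2 := by exact_mod_cast hr2'
      omega
  · have hu3 : 3 ≤ u := by omega
    have hA : r ^ (a - j) + 1 ≤ 2 * u := by
      by_contra hcon
      push_neg at hcon
      have h2u : 2 * u ≤ r ^ (a - j) := by omega
      have hlt : 2 * r ^ a < 2 * M := by omega
      have he : (q + 1) * r ^ (a - j) = 2 * r ^ a := by
        rw [← hσu, ← sigma_prime hqp, ← hσM]; exact h2
      have hchain : 2 * M + 2 * u ≤ 2 * r ^ a := by
        calc 2 * M + 2 * u = (q + 1) * (2 * u) := by rw [hMqu]; ring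
        _ ≤ (q + 1) * r ^ (a - j) := Nat.mul_le_mul_left _ h2u
        _ = 2 * r ^ a := he
      omega
    have hB : r ^ j + 1 ≤ 2 * u := by
      set Sj := ∑ i ∈ range j, r ^ i with hSj
      set S' := ∑ i ∈ range (a - j + 1), r ^ i with hS'
      have hsplit : M = Sj + r ^ j * S' := by
        rw [hM, sigma_pp hr, show a + 1 = j + (a - j + 1) by omega, geom_split]
      have hid : (u + Sj) + r ^ j * S' = 2 * r ^ j * u := by
        calc (u + Sj) + r ^ j * S' = u + M := by rw [hsplit]; ring
        _ = u + q * u := by rw [hMqu]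
        _ = (q + 1) * u := by ring
        _ = 2 * r ^ j * u := by rw [hq1']
      have hd1 : r ^ j ∣ (u + Sj) + r ^ j * S' := ⟨2 * u, by rw [hid]; ring⟩
      have hd2 : r ^ j ∣ r ^ j * S' := dvd_mul_right _ _
      have hdvdX : r ^ j ∣ u + Sj := (Nat.dvd_add_right hd2).mp (by rwa [add_comm] at hd1)
      have hXge : r ^ j ≤ u + Sj := Nat.le_of_dvd (by omega) hdvdX
      have hSjle : 2 * Sj + 1 ≤ r ^ j := by
        have hg := geom_mul (show 1 ≤ r by omega) j
        have h9 : Sj * 2 ≤ Sj * (r - 1) := Nat.mul_le_mul_left _ (by omega)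
        have h10 : Sj * 2 + 1 ≤ r ^ j := by rw [← hg]; exact Nat.add_le_add_right h9 1
        omega
      omega
    have hC : r ^ a < 4 * (a + 1) ^ 4 := by
      have hmul : r ^ a = r ^ j * r ^ (a - j) := by rw [← pow_add]; congr 1; omega
      have h10 : r ^ j * r ^ (a - j) < (2 * u) * (2 * u) :=
        Nat.mul_lt_mul_of_lt_of_le (by omega) (by omega) (by omega)
      have h11 : u * u ≤ (a + 1) ^ 2 * (a + 1) ^ 2 := Nat.mul_le_mul hule hule
      calc r ^ a = r ^ j * r ^ (a - j) := hmul
      _ < (2 * u) * (2 * u) := h10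
      _ = 4 * (u * u) := by ring
      _ ≤ 4 * ((a + 1) ^ 2 * (a + 1) ^ 2) := by omega
      _ = 4 * (a + 1) ^ 4 := by ring
    exact num_endgame hr hr3 ha2 haE hC h2

end Stmt14Aux

open Stmt14Aux in
/-- If `N` is an odd perfect number and `r^a` is a prime power exactly
dividing `N` (with `a ≥ 1`), then `r^a * σ(r^a) / N ≤ 2/3`. -/
theorem stmt_14 (N r a : ℕ) (hodd : Odd N) (hperf : Nat.Perfect N) (hr : r.Prime)
    (ha : 1 ≤ a) (hdvd : r ^ a ∣ N) (hndvd : ¬ r ^ (a + 1) ∣ N) :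
    ((r : ℚ) ^ a * (ArithmeticFunction.sigma 1 (r ^ a) : ℚ)) / (N : ℚ) ≤ 2 / 3 := by
  have hNodd : N % 2 = 1 := Nat.odd_iff.mp hodd
  have hN0 : 0 < N := by omega
  have hσN : ArithmeticFunction.sigma 1 N = 2 * N := by
    rw [ArithmeticFunction.sigma_one_apply]
    exact (Nat.perfect_iff_sum_divisors_eq_two_mul hN0).mp hperf
  obtain ⟨m, hm⟩ := hdvd
  have hm0 : m ≠ 0 := by rintro rfl; rw [mul_zero] at hm; omega
  have hrm : ¬ r ∣ m := by
    rintro ⟨s, hs⟩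
    exact hndvd ⟨s, by rw [hm, hs, pow_succ]; ring⟩
  have hr2 : r ≠ 2 := by
    rintro rfl
    have h2N : (2:ℕ) ∣ N := (dvd_pow_self 2 (by omega : a ≠ 0)).trans ⟨m, hm⟩
    omega
  have hmodd : m % 2 = 1 := by
    by_contra hcon
    have h2m : (2:ℕ) ∣ m := by omega
    have h2N : (2:ℕ) ∣ N := h2m.trans ⟨r ^ a, by rw [hm]; ring⟩
    omega
  have hcop : Nat.Coprime (r ^ a) m :=
    Nat.Coprime.pow_left _ ((Nat.Prime.coprime_iff_not_dvd hr).mpr hrm)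
  have hmul : ArithmeticFunction.sigma 1 (r ^ a) * ArithmeticFunction.sigma 1 m
      = 2 * (r ^ a * m) := by
    rw [← ArithmeticFunction.isMultiplicative_sigma.map_mul_of_coprime hcop, ← hm, hσN, hm]
  have hra0 : 0 < r ^ a := pow_pos hr.pos a
  have hdvdσ : r ^ a ∣ ArithmeticFunction.sigma 1 m := by
    have h1 : r ^ a ∣ ArithmeticFunction.sigma 1 (r ^ a) * ArithmeticFunction.sigma 1 m :=
      hmul ▸ ⟨2 * m, by ring⟩
    have hcop2 : Nat.Coprime (r ^ a) (ArithmeticFunction.sigma 1 (r ^ a)) :=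
      Nat.Coprime.pow_left _ ((hr.coprime_iff_not_dvd).mpr (not_dvd_sigma_pp hr a))
    exact hcop2.dvd_of_dvd_mul_left h1
  obtain ⟨k, hk⟩ := hdvdσ
  have hkey : ArithmeticFunction.sigma 1 (r ^ a) * k = 2 * m := by
    have h3 : r ^ a * (ArithmeticFunction.sigma 1 (r ^ a) * k) = r ^ a * (2 * m) := by
      calc r ^ a * (ArithmeticFunction.sigma 1 (r ^ a) * k)
          = ArithmeticFunction.sigma 1 (r ^ a) * (r ^ a * k) := by ring
      _ = ArithmeticFunction.sigma 1 (r ^ a) * ArithmeticFunction.sigma 1 m := by rw [← hk]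
      _ = 2 * (r ^ a * m) := hmul
      _ = r ^ a * (2 * m) := by ring
    exact Nat.eq_of_mul_eq_mul_left hra0 h3
  have hσm0 : ArithmeticFunction.sigma 1 m ≠ 0 := (sigma_pos hm0).ne'
  have hk3 : 3 ≤ k := by
    have hk0 : k ≠ 0 := by rintro rfl; rw [mul_zero] at hk; exact hσm0 hk
    have hk1 : k ≠ 1 := by
      rintro rfl
      rw [mul_one] at hkey hk
      exact k1_impossible hr hr2 ha hmodd hk hkey
    have hk2 : k ≠ 2 := by
      rintro rfl
      have hMm : ArithmeticFunction.sigma 1 (r ^ a) = m := by omega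
      refine k2_impossible hr hr2 ha ?_ ?_
      · rw [hMm]; exact hmodd
      · rw [hMm, hk]; ring
    omega
  have hfinal : 3 * (r ^ a * ArithmeticFunction.sigma 1 (r ^ a)) ≤ 2 * N := by
    calc 3 * (r ^ a * ArithmeticFunction.sigma 1 (r ^ a))
        ≤ k * (r ^ a * ArithmeticFunction.sigma 1 (r ^ a)) := Nat.mul_le_mul_right _ hk3
    _ = r ^ a * (ArithmeticFunction.sigma 1 (r ^ a) * k) := by ring
    _ = r ^ a * (2 * m) := by rw [hkey]
    _ = 2 * N := by rw [hm]; ring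
  rw [div_le_div_iff₀ (by exact_mod_cast hN0) (by norm_num)]
  have hq := (Nat.cast_le (α := ℚ)).mpr hfinal
  push_cast at hq ⊢
  linarith
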